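/- For all real x with 0 ≤ x ≤ 1, one has 2¹³·(f((1+x)/32) + f((1−x)/32)) = 19/2025 + (2/9)x² + (1/3)x⁴. -/

import Mathlib

open scoped BigOperators

open Set intervalIntegral Topology

section aux

variable {f : ℝ → ℝ}

/-- One-sided derivative relation derived from the integral equation. -/
lemma fabius_hasDerivAt (hcont : ContinuousOn f (Set.Ici 0))
    (hint : ∀ x : ℝ, 0 ≤ x → f x = ∫ t in (0:ℝ)..(2 * x), f t) :
    ∀ y : ℝ, 0 < y → HasDerivAt f (2 * f (2 * y)) y := by
  intro y hy
  have h2y : (0:ℝ) < 2 * y := by linarith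
  have hi : IntervalIntegrable f MeasureTheory.volume 0 (2 * y) := by
    apply ContinuousOn.intervalIntegrable
    apply hcont.mono
    rw [Set.uIcc_of_le (by linarith)]
    intro t ht; exact ht.1
  have hmeas : StronglyMeasurableAtFilter f (𝓝 (2 * y)) := by
    exact (hcont.mono (Set.Ioi_subset_Ici le_rfl)).stronglyMeasurableAtFilter isOpen_Ioi
      (2 * y) h2y
  have hca : ContinuousAt f (2 * y) :=
    hcont.continuousAt (Ici_mem_nhds h2y)
  have hA : HasDerivAt (fun u => ∫ t in (0:ℝ)..u, f t) (f (2 * y)) (2 * y) :=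
    integral_hasDerivAt_right hi hmeas hca
  have hlin : HasDerivAt (fun u : ℝ => 2 * u) 2 y := by
    simpa using (hasDerivAt_id y).const_mul 2
  have hB : HasDerivAt (fun u : ℝ => ∫ t in (0:ℝ)..(2 * u), f t) (f (2 * y) * 2) y :=
    HasDerivAt.comp y hA hlin
  have heq : f =ᶠ[𝓝 y] fun u : ℝ => ∫ t in (0:ℝ)..(2 * u), f t := by
    filter_upwards [Ioi_mem_nhds hy] with u hu
    exact hint u (le_of_lt hu)
  have := hB.congr_of_eventuallyEq heq
  refine this.congr_deriv ?_
  ring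

lemma deriv_plus (hd : ∀ y : ℝ, 0 < y → HasDerivAt f (2 * f (2 * y)) y)
    (c : ℝ) (hc : 0 < c) {t : ℝ} (ht : 0 < 1 + t) :
    HasDerivAt (fun s : ℝ => f ((1 + s) / c)) (2 * f ((1 + t) * 2 / c) * (1 / c)) t := by
  have hin : HasDerivAt (fun s : ℝ => (1 + s) / c) (1 / c) t := by
    simpa using ((hasDerivAt_id t).const_add 1).div_const c
  have harg : (0:ℝ) < (1 + t) / c := div_pos ht hc
  have := HasDerivAt.comp t (hd ((1 + t) / c) harg) hin
  have e : 2 * ((1 + t) / c) = (1 + t) * 2 / c := by ring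
  rw [e] at this
  exact this

lemma deriv_minus (hd : ∀ y : ℝ, 0 < y → HasDerivAt f (2 * f (2 * y)) y)
    (c : ℝ) (hc : 0 < c) {t : ℝ} (ht : t < 1) :
    HasDerivAt (fun s : ℝ => f ((1 - s) / c)) (2 * f ((1 - t) * 2 / c) * (-1 / c)) t := by
  have hin : HasDerivAt (fun s : ℝ => (1 - s) / c) (-1 / c) t := by
    have : HasDerivAt (fun s : ℝ => 1 - s) (-1) t := by
      simpa using (hasDerivAt_id t).const_sub 1
    simpa using this.div_const c
  have harg : (0:ℝ) < (1 - t) / c := div_pos (by linarith) hc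
  have := HasDerivAt.comp t (hd ((1 - t) / c) harg) hin
  have e : 2 * ((1 - t) / c) = (1 - t) * 2 / c := by ring
  rw [e] at this
  exact this

lemma cont_comp_plus (hcont : ContinuousOn f (Set.Ici 0)) (c : ℝ) (hc : 0 < c) :
    ContinuousOn (fun s : ℝ => f ((1 + s) / c)) (Set.Icc 0 1) := by
  apply hcont.comp (Continuous.continuousOn (by continuity))
  intro t ht
  exact div_nonneg (by linarith [ht.1]) hc.le

lemma cont_comp_minus (hcont : ContinuousOn f (Set.Ici 0)) (c : ℝ) (hc : 0 < c) :
    ContinuousOn (fun s : ℝ => f ((1 - s) / c)) (Set.Icc 0 1) := by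
  apply hcont.comp (Continuous.continuousOn (by continuity))
  intro t ht
  exact div_nonneg (by linarith [ht.2]) hc.le

/-- Difference level: if `f((1+t)*2/c) + f((1-t)*2/c) = (c/2) * Qd t` on `[0,1]`,
then `f((1+x)/c) - f((1-x)/c) = Q x` on `[0,1]`. -/
lemma diff_level (hcont : ContinuousOn f (Set.Ici 0))
    (hd : ∀ y : ℝ, 0 < y → HasDerivAt f (2 * f (2 * y)) y)
    (c : ℝ) (hc : 0 < c) (Q Qd : ℝ → ℝ)
    (hQ : ∀ t, HasDerivAt Q (Qd t) t) (hQ0 : Q 0 = 0)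
    (hprev : ∀ t ∈ Set.Icc (0:ℝ) 1, f ((1 + t) * 2 / c) + f ((1 - t) * 2 / c) = (c / 2) * Qd t) :
    ∀ x ∈ Set.Icc (0:ℝ) 1, f ((1 + x) / c) - f ((1 - x) / c) = Q x := by
  have hQcont : Continuous Q := by
    rw [continuous_iff_continuousAt]; exact fun t => (hQ t).continuousAt
  have hgc : ContinuousOn (fun t : ℝ => f ((1 + t) / c) - f ((1 - t) / c) - Q t)
      (Set.Icc 0 1) :=
    ((cont_comp_plus hcont c hc).sub (cont_comp_minus hcont c hc)).sub hQcont.continuousOn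
  have key := constant_of_has_deriv_right_zero hgc (f := fun t : ℝ =>
      f ((1 + t) / c) - f ((1 - t) / c) - Q t) ?_
  · intro x hx
    have h := key x hx
    norm_num [hQ0] at h
    linarith
  · intro t ht
    have d1 := deriv_plus hd c hc (t := t) (by linarith [ht.1])
    have d2 := deriv_minus hd c hc (t := t) ht.2
    have hD : HasDerivAt (fun t : ℝ => f ((1 + t) / c) - f ((1 - t) / c) - Q t)
        (2 * f ((1 + t) * 2 / c) * (1 / c) - 2 * f ((1 - t) * 2 / c) * (-1 / c) - Qd t) t :=
      (d1.sub d2).sub (hQ t)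
    have e := hprev t ⟨ht.1, ht.2.le⟩
    have hc' : c ≠ 0 := hc.ne'
    have hz : 2 * f ((1 + t) * 2 / c) * (1 / c) - 2 * f ((1 - t) * 2 / c) * (-1 / c) - Qd t
        = 0 := by
      generalize f ((1 + t) * 2 / c) = A at e ⊢
      generalize f ((1 - t) * 2 / c) = B at e ⊢
      field_simp
      linarith [e]
    rw [hz] at hD
    exact hD.hasDerivWithinAt

/-- Sum level: if `f((1+t)*2/c) - f((1-t)*2/c) = (c/2) * Qd t` on `[0,1]`,
then `f((1+x)/c) + f((1-x)/c) = 2 * f (1/c) + Q x` on `[0,1]`. -/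
lemma sum_level (hcont : ContinuousOn f (Set.Ici 0))
    (hd : ∀ y : ℝ, 0 < y → HasDerivAt f (2 * f (2 * y)) y)
    (c : ℝ) (hc : 0 < c) (Q Qd : ℝ → ℝ)
    (hQ : ∀ t, HasDerivAt Q (Qd t) t) (hQ0 : Q 0 = 0)
    (hprev : ∀ t ∈ Set.Icc (0:ℝ) 1, f ((1 + t) * 2 / c) - f ((1 - t) * 2 / c) = (c / 2) * Qd t) :
    ∀ x ∈ Set.Icc (0:ℝ) 1, f ((1 + x) / c) + f ((1 - x) / c) = 2 * f (1 / c) + Q x := by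
  have hQcont : Continuous Q := by
    rw [continuous_iff_continuousAt]; exact fun t => (hQ t).continuousAt
  have hgc : ContinuousOn (fun t : ℝ => f ((1 + t) / c) + f ((1 - t) / c) - Q t)
      (Set.Icc 0 1) :=
    ((cont_comp_plus hcont c hc).add (cont_comp_minus hcont c hc)).sub hQcont.continuousOn
  have key := constant_of_has_deriv_right_zero hgc (f := fun t : ℝ =>
      f ((1 + t) / c) + f ((1 - t) / c) - Q t) ?_
  · intro x hx
    have h := key x hx
    norm_num [hQ0] at h
    rw [one_div]
    linarith
  · intro t ht
    have d1 := deriv_plus hd c hc (t := t) (by linarith [ht.1])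
    have d2 := deriv_minus hd c hc (t := t) ht.2
    have hD : HasDerivAt (fun t : ℝ => f ((1 + t) / c) + f ((1 - t) / c) - Q t)
        (2 * f ((1 + t) * 2 / c) * (1 / c) + 2 * f ((1 - t) * 2 / c) * (-1 / c) - Qd t) t :=
      (d1.add d2).sub (hQ t)
    have e := hprev t ⟨ht.1, ht.2.le⟩
    have hc' : c ≠ 0 := hc.ne'
    have hz : 2 * f ((1 + t) * 2 / c) * (1 / c) + 2 * f ((1 - t) * 2 / c) * (-1 / c) - Qd t
        = 0 := by
      generalize f ((1 + t) * 2 / c) = A at e ⊢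
      generalize f ((1 - t) * 2 / c) = B at e ⊢
      field_simp
      linarith [e]
    rw [hz] at hD
    exact hD.hasDerivWithinAt

end aux

theorem fabius_stmt_4 (f : ℝ → ℝ)
    (hcont : ContinuousOn f (Set.Ici 0))
    (hsym : ∀ x : ℝ, 0 ≤ x → x ≤ 1 → f x + f (1 - x) = 1)
    (hint : ∀ x : ℝ, 0 ≤ x → f x = ∫ t in (0:ℝ)..(2 * x), f t) :
    ∀ x : ℝ, 0 ≤ x → x ≤ 1 →
      2 ^ 13 * (f ((1 + x) / 32) + f ((1 - x) / 32)) = 19 / 2025 + (2 / 9) * x ^ 2 + (1 / 3) * x ^ 4 := by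
  have h0 : f 0 = 0 := by simpa using hint 0 le_rfl
  have hd : ∀ y : ℝ, 0 < y → HasDerivAt f (2 * f (2 * y)) y :=
    fabius_hasDerivAt hcont hint
  -- Level 1 : sum at scale 1/2 equals 1 (from symmetry)
  have hP1 : ∀ t ∈ Set.Icc (0:ℝ) 1, f ((1 + t) / 2) + f ((1 - t) / 2) = 1 := by
    intro t ht
    have := hsym ((1 - t) / 2) (by linarith [ht.2]) (by linarith [ht.1])
    have e : 1 - (1 - t) / 2 = (1 + t) / 2 := by ring
    rw [e] at this
    linarith
  -- Level 2 : f((1+x)/4) - f((1-x)/4) = x/2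
  have hP2 : ∀ x ∈ Set.Icc (0:ℝ) 1, f ((1 + x) / 4) - f ((1 - x) / 4) = x / 2 := by
    apply diff_level hcont hd 4 (by norm_num) (fun t => t / 2) (fun t => 1 / 2)
    · intro t
      simpa using (hasDerivAt_id t).div_const 2
    · norm_num
    · intro t ht
      have := hP1 t ht
      have e1 : (1 + t) * 2 / 4 = (1 + t) / 2 := by ring
      have e2 : (1 - t) * 2 / 4 = (1 - t) / 2 := by ring
      rw [e1, e2]
      linarith
  -- Level 3 : f((1+x)/8) + f((1-x)/8) = 2 f(1/8) + x²/16
  have hP3 : ∀ x ∈ Set.Icc (0:ℝ) 1,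
      f ((1 + x) / 8) + f ((1 - x) / 8) = 2 * f (1 / 8) + x ^ 2 / 16 := by
    apply sum_level hcont hd 8 (by norm_num) (fun t => t ^ 2 / 16) (fun t => t / 8)
    · intro t
      have := (hasDerivAt_pow 2 t).div_const 16
      refine this.congr_deriv ?_
      push_cast
      ring
    · norm_num
    · intro t ht
      have := hP2 t ht
      have e1 : (1 + t) * 2 / 8 = (1 + t) / 4 := by ring
      have e2 : (1 - t) * 2 / 8 = (1 - t) / 4 := by ring
      rw [e1, e2]
      linarith
  -- Level 4 : f((1+x)/16) - f((1-x)/16) = f(1/8)*x/4 + x³/384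
  have hP4 : ∀ x ∈ Set.Icc (0:ℝ) 1,
      f ((1 + x) / 16) - f ((1 - x) / 16) = f (1 / 8) * x / 4 + x ^ 3 / 384 := by
    apply diff_level hcont hd 16 (by norm_num)
      (fun t => f (1 / 8) * t / 4 + t ^ 3 / 384)
      (fun t => f (1 / 8) / 4 + t ^ 2 / 128)
    · intro t
      have h1 : HasDerivAt (fun x : ℝ => f (1 / 8) * x / 4) (f (1 / 8) / 4) t := by
        simpa using ((hasDerivAt_id t).const_mul (f (1 / 8))).div_const 4
      have h2 : HasDerivAt (fun x : ℝ => x ^ 3 / 384) (t ^ 2 / 128) t := by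
        have := (hasDerivAt_pow 3 t).div_const 384
        refine this.congr_deriv ?_
        push_cast
        ring
      exact h1.add h2
    · norm_num
    · intro t ht
      have := hP3 t ht
      have e1 : (1 + t) * 2 / 16 = (1 + t) / 8 := by ring
      have e2 : (1 - t) * 2 / 16 = (1 - t) / 8 := by ring
      rw [e1, e2]
      linarith
  -- Pin down f(1/8)
  have hc8 : f (1 / 8) = 1 / 288 := by
    have h := hP4 1 (by norm_num)
    norm_num [h0] at h
    linarith
  -- Level 5 : f((1+x)/32) + f((1-x)/32) = 2 f(1/32) + x²/36864 + x⁴/24576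
  have hP5 : ∀ x ∈ Set.Icc (0:ℝ) 1,
      f ((1 + x) / 32) + f ((1 - x) / 32)
        = 2 * f (1 / 32) + (x ^ 2 / 36864 + x ^ 4 / 24576) := by
    apply sum_level hcont hd 32 (by norm_num)
      (fun t => t ^ 2 / 36864 + t ^ 4 / 24576)
      (fun t => t / 18432 + t ^ 3 / 6144)
    · intro t
      have h1 : HasDerivAt (fun x : ℝ => x ^ 2 / 36864) (t / 18432) t := by
        have := (hasDerivAt_pow 2 t).div_const 36864
        refine this.congr_deriv ?_
        push_cast
        ring
      have h2 : HasDerivAt (fun x : ℝ => x ^ 4 / 24576) (t ^ 3 / 6144) t := by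
        have := (hasDerivAt_pow 4 t).div_const 24576
        refine this.congr_deriv ?_
        push_cast
        ring
      exact h1.add h2
    · norm_num
    · intro t ht
      have := hP4 t ht
      have e1 : (1 + t) * 2 / 32 = (1 + t) / 16 := by ring
      have e2 : (1 - t) * 2 / 32 = (1 - t) / 16 := by ring
      rw [e1, e2, hc8] at *
      linarith
  -- Level 6 : f((1+x)/64) - f((1-x)/64) = f(1/32)*x/16 + x³/3538944 + x⁵/3932160
  have hP6 : ∀ x ∈ Set.Icc (0:ℝ) 1,
      f ((1 + x) / 64) - f ((1 - x) / 64)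
        = f (1 / 32) * x / 16 + (x ^ 3 / 3538944 + x ^ 5 / 3932160) := by
    apply diff_level hcont hd 64 (by norm_num)
      (fun t => f (1 / 32) * t / 16 + (t ^ 3 / 3538944 + t ^ 5 / 3932160))
      (fun t => f (1 / 32) / 16 + (t ^ 2 / 1179648 + t ^ 4 / 786432))
    · intro t
      have h1 : HasDerivAt (fun x : ℝ => f (1 / 32) * x / 16) (f (1 / 32) / 16) t := by
        simpa using ((hasDerivAt_id t).const_mul (f (1 / 32))).div_const 16
      have h2 : HasDerivAt (fun x : ℝ => x ^ 3 / 3538944) (t ^ 2 / 1179648) t := by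
        have := (hasDerivAt_pow 3 t).div_const 3538944
        refine this.congr_deriv ?_
        push_cast
        ring
      have h3 : HasDerivAt (fun x : ℝ => x ^ 5 / 3932160) (t ^ 4 / 786432) t := by
        have := (hasDerivAt_pow 5 t).div_const 3932160
        refine this.congr_deriv ?_
        push_cast
        ring
      exact h1.add (h2.add h3)
    · norm_num
    · intro t ht
      have := hP5 t ht
      have e1 : (1 + t) * 2 / 64 = (1 + t) / 32 := by ring
      have e2 : (1 - t) * 2 / 64 = (1 - t) / 32 := by ring
      rw [e1, e2]
      linarith
  -- Pin down f(1/32)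
  have hc32 : f (1 / 32) = 19 / 33177600 := by
    have h := hP6 1 (by norm_num)
    norm_num [h0] at h
    linarith
  -- Conclusion
  intro x hx0 hx1
  have h := hP5 x ⟨hx0, hx1⟩
  rw [h, hc32]
  ring
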